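/- Let 0 < β ≤ 1/3 and s ≥ 3. Consider the geometrically symmetric Cantor set K_β with ℓ_k = β^k, and interpolation nodes Y_{s-1} (the 2^s endpoints of the basic intervals of level s-1), ordered increasingly as x_1 < ... < x_{2^s}. Let k = 2^{s-1} - 1 (so x_k = ℓ_1 - ℓ_{s-1}) and x̃ = ℓ_s. Then the fundamental Lagrange polynomial l_k satisfies |l_k(x̃)| ≥ ℓ_s · ((1 - ℓ_s)/(1 - ℓ_1 + ℓ_{s-1}))^{2^{s-1}}. -/

import Mathlib

section Aux
variable (β : ℝ) (L : ℕ → ℕ → ℝ)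

lemma cL_zero (hL0 : L 0 0 = 0) (hLleft : ∀ k j, L (k + 1) (2 * j) = L k j) :
    ∀ k, L k 0 = 0 := by
  intro k
  induction k with
  | zero => exact hL0
  | succ n ih => have := hLleft n 0; simpa [ih] using this

lemma cL_one (hL0 : L 0 0 = 0)
    (hLleft : ∀ k j, L (k + 1) (2 * j) = L k j)
    (hLright : ∀ k j, L (k + 1) (2 * j + 1) = L k j + β ^ k - β ^ (k + 1)) :
    ∀ k, L (k + 1) 1 = β ^ k - β ^ (k + 1) := by
  intro k
  have := hLright k 0
  simpa [cL_zero L hL0 hLleft k] using this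

lemma cL_last (hL0 : L 0 0 = 0)
    (hLright : ∀ k j, L (k + 1) (2 * j + 1) = L k j + β ^ k - β ^ (k + 1)) :
    ∀ k, L k (2 ^ k - 1) = 1 - β ^ k := by
  intro k
  induction k with
  | zero => simpa using hL0
  | succ n ih =>
    have h1 : 1 ≤ 2 ^ n := Nat.one_le_two_pow
    have hidx : 2 ^ (n + 1) - 1 = 2 * (2 ^ n - 1) + 1 := by
      have : 2 ^ (n + 1) = 2 * 2 ^ n := by ring
      omega
    rw [hidx, hLright n (2 ^ n - 1), ih]; ring

lemma cL_mid1 (hL0 : L 0 0 = 0) (hLleft : ∀ k j, L (k + 1) (2 * j) = L k j)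
    (hLright : ∀ k j, L (k + 1) (2 * j + 1) = L k j + β ^ k - β ^ (k + 1)) :
    ∀ k, L (k + 1) (2 ^ k - 1) = β - β ^ (k + 1) := by
  intro k
  induction k with
  | zero => simpa using (cL_zero L hL0 hLleft 1)
  | succ n ih =>
    have h1 : 1 ≤ 2 ^ n := Nat.one_le_two_pow
    have hidx : 2 ^ (n + 1) - 1 = 2 * (2 ^ n - 1) + 1 := by
      have : 2 ^ (n + 1) = 2 * 2 ^ n := by ring
      omega
    rw [hidx, hLright (n + 1) (2 ^ n - 1), ih]; ring

lemma cL_mid2 (hL0 : L 0 0 = 0) (hLleft : ∀ k j, L (k + 1) (2 * j) = L k j)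
    (hLright : ∀ k j, L (k + 1) (2 * j + 1) = L k j + β ^ k - β ^ (k + 1)) :
    ∀ k, L (k + 1) (2 ^ k) = 1 - β := by
  intro k
  induction k with
  | zero => have := hLright 0 0; simpa [hL0] using this
  | succ n ih =>
    have hidx : 2 ^ (n + 1) = 2 * 2 ^ n := by ring
    rw [hidx, hLleft (n + 1) (2 ^ n), ih]

lemma cL_gap (hβ : 0 < β) (hβ' : β ≤ 1/3)
    (hL0 : L 0 0 = 0) (hLleft : ∀ k j, L (k + 1) (2 * j) = L k j)
    (hLright : ∀ k j, L (k + 1) (2 * j + 1) = L k j + β ^ k - β ^ (k + 1)) :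
    ∀ k i, i + 1 < 2 ^ (k + 1) → L (k + 1) i + (β ^ k - β ^ (k + 1)) ≤ L (k + 1) (i + 1) := by
  intro k
  induction k with
  | zero =>
    intro i hi
    have hi0 : i = 0 := by omega
    subst hi0
    have h0 := cL_zero L hL0 hLleft 1
    have h1 := hLright 0 0
    simp only [mul_zero, zero_add] at h1
    rw [h0, h1, hL0]; norm_num
  | succ n ih =>
    intro i hi
    rcases Nat.even_or_odd i with ⟨a, ha⟩ | ⟨a, ha⟩
    · subst ha
      rw [show a + a + 1 = 2 * a + 1 by ring, show a + a = 2 * a by ring,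
        hLright (n + 1) a, hLleft (n + 1) a]
      linarith
    · subst ha
      have ha1 : a + 1 < 2 ^ (n + 1) := by
        have : 2 ^ (n + 2) = 2 * 2 ^ (n + 1) := by ring
        omega
      have hgap := ih a ha1
      have h2 : 2 * a + 1 + 1 = 2 * (a + 1) := by ring
      rw [h2, hLleft (n + 1) (a + 1), hLright (n + 1) a]
      have hpow : 0 < β ^ n := pow_pos hβ n
      have e1 : β ^ (n + 1) = β ^ n * β := pow_succ β n
      have e2 : β ^ (n + 1 + 1) = β ^ n * β * β := by rw [pow_succ, e1]
      nlinarith [mul_nonneg hpow.le (show (0:ℝ) ≤ 1 - 3 * β by linarith),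
        mul_nonneg (mul_nonneg hpow.le hβ.le) hβ.le]
      
lemma cL_sym (hL0 : L 0 0 = 0) (hLleft : ∀ k j, L (k + 1) (2 * j) = L k j)
    (hLright : ∀ k j, L (k + 1) (2 * j + 1) = L k j + β ^ k - β ^ (k + 1)) :
    ∀ k, ∀ j < 2 ^ k, L (k + 1) j + L (k + 1) (2 ^ k - 1 - j) = β - β ^ (k + 1) := by
  intro k
  induction k with
  | zero =>
    intro j hj
    interval_cases j
    have h0 := cL_zero L hL0 hLleft 1
    simp [h0]
  | succ n ih =>
    intro j hj
    rcases Nat.even_or_odd j with ⟨a, ha⟩ | ⟨a, ha⟩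
    · subst ha
      have haLt : a < 2 ^ n := by
        have : 2 ^ (n + 1) = 2 * 2 ^ n := by ring
        omega
      have h1 : 1 ≤ 2 ^ n := Nat.one_le_two_pow
      have hidx : 2 ^ (n + 1) - 1 - (2 * a) = 2 * (2 ^ n - 1 - a) + 1 := by
        have : 2 ^ (n + 1) = 2 * 2 ^ n := by ring
        omega
      rw [show a + a = 2 * a by ring, hidx, hLleft (n + 1) a, hLright (n + 1) (2 ^ n - 1 - a)]
      have := ih a haLt
      linarith [this]
    · subst ha
      have haLt : a < 2 ^ n := by
        have : 2 ^ (n + 1) = 2 * 2 ^ n := by ring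
        omega
      have h1 : 1 ≤ 2 ^ n := Nat.one_le_two_pow
      have hidx : 2 ^ (n + 1) - 1 - (2 * a + 1) = 2 * (2 ^ n - 1 - a) := by
        have : 2 ^ (n + 1) = 2 * 2 ^ n := by ring
        omega
      rw [hidx, hLright (n + 1) a, hLleft (n + 1) (2 ^ n - 1 - a)]
      have := ih a haLt
      linarith [this]

end Aux

set_option maxHeartbeats 1000000

/-- `L k j` is the left endpoint of the `j`-th basic interval of level `k` of `K_β`
(lengths `β^k`); `Y` is the set of the `2^s` endpoints of the level-`(s-1)` intervals.
The fundamental Lagrange polynomial at the node `x_k = β - β^(s-1)` evaluated at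
`x̃ = β^s` is the displayed product. -/
theorem stmt_7 (β : ℝ) (hβ : 0 < β) (hβ' : β ≤ 1/3) (s : ℕ) (hs : 3 ≤ s)
    (L : ℕ → ℕ → ℝ) (hL0 : L 0 0 = 0)
    (hLleft : ∀ k j, L (k + 1) (2 * j) = L k j)
    (hLright : ∀ k j, L (k + 1) (2 * j + 1) = L k j + β ^ k - β ^ (k + 1))
    (Y : Finset ℝ)
    (hY : Y = (Finset.range (2 ^ (s - 1))).image (L (s - 1)) ∪
      (Finset.range (2 ^ (s - 1))).image (fun j => L (s - 1) j + β ^ (s - 1))) :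
    β ^ s * ((1 - β ^ s) / (1 - β + β ^ (s - 1))) ^ 2 ^ (s - 1) ≤
      |∏ y ∈ Y.erase (β - β ^ (s - 1)),
        ((β ^ s - y) / ((β - β ^ (s - 1)) - y))| := by
  obtain ⟨m, rfl⟩ : ∃ m, s = m + 3 := ⟨s - 3, by omega⟩
  have hs1 : m + 3 - 1 = m + 2 := by omega
  rw [hs1] at hY ⊢
  -- basic numeric facts
  have hβ1 : β < 1 := by linarith
  have hpow : ∀ k : ℕ, (0:ℝ) < β ^ k := fun k => pow_pos hβ k
  have hpow3 : ∀ k : ℕ, 3 * β ^ (k + 1) ≤ β ^ k := by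
    intro k
    have : β ^ (k + 1) = β ^ k * β := pow_succ β k
    nlinarith [hpow k]
  set n : ℕ := 2 ^ (m + 2) with hn
  have hn4 : 4 ≤ n := by
    have : 2 ^ 2 ≤ 2 ^ (m + 2) := Nat.pow_le_pow_right (by norm_num) (by omega)
    simpa using this
  set j0 : ℕ := n - 2 with hj0def
  -- the enumeration of the nodes
  set e : ℕ → ℝ := fun j => L (m + 2) (j / 2) + (if j % 2 = 1 then β ^ (m + 2) else 0)
    with he
  have he_even : ∀ j, e (2 * j) = L (m + 2) j := by
    intro j
    simp [he, Nat.mul_div_cancel_left, Nat.mul_mod_right]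
  have he_odd : ∀ j, e (2 * j + 1) = L (m + 2) j + β ^ (m + 2) := by
    intro j
    have h1 : (2 * j + 1) / 2 = j := by omega
    have h2 : (2 * j + 1) % 2 = 1 := by omega
    simp [he, h1, h2]
  -- special values
  have hLz := cL_zero L hL0 hLleft
  have e0 : e 0 = 0 := by simpa [hLz] using he_even 0
  have e1 : e 1 = β ^ (m + 2) := by simpa [hLz] using he_odd 0
  have e2 : e 2 = β ^ (m + 1) - β ^ (m + 2) := by
    have := he_even 1
    rw [cL_one β L hL0 hLleft hLright (m + 1)] at this
    simpa using this
  have ej0 : e j0 = β - β ^ (m + 2) := by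
    have hidx : j0 = 2 * (2 ^ (m + 1) - 1) := by
      have : n = 2 * 2 ^ (m + 1) := by rw [hn]; ring
      have h1 : 1 ≤ 2 ^ (m+1) := Nat.one_le_two_pow
      omega
    rw [hidx, he_even, cL_mid1 β L hL0 hLleft hLright (m + 1)]
  have en : e n = 1 - β := by
    have hidx : n = 2 * 2 ^ (m + 1) := by rw [hn]; ring
    rw [hidx, he_even, cL_mid2 β L hL0 hLleft hLright (m + 1)]
  have elast : e (2 * n - 1) = 1 := by
    have hidx : 2 * n - 1 = 2 * (n - 1) + 1 := by omega
    rw [hidx, he_odd]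
    have : n - 1 = 2 ^ (m + 2) - 1 := by rw [hn]
    rw [this, cL_last β L hL0 hLright (m + 2)]
    ring
  -- monotonicity
  have estep : ∀ j, j + 1 < 2 * n → e j < e (j + 1) := by
    intro j hj
    rcases Nat.even_or_odd j with ⟨a, ha⟩ | ⟨a, ha⟩
    · subst ha
      rw [show a + a = 2 * a by ring, show 2 * a + 1 = 2 * a + 1 from rfl]
      rw [he_even, show (2 : ℕ) * a + 1 = 2 * a + 1 from rfl, he_odd]
      linarith [hpow (m + 2)]
    · subst ha
      have ha1 : a + 1 < 2 ^ (m + 2) := by omega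
      have hgap := cL_gap β L hβ hβ' hL0 hLleft hLright (m + 1) a (by
        have : 2 ^ (m + 1 + 1) = n := by rw [hn]
        omega)
      rw [show 2 * a + 1 + 1 = 2 * (a + 1) by ring, he_odd, he_even]
      have h3 := hpow3 (m + 1)
      have := hpow (m + 2)
      linarith
  have emono : ∀ b, b < 2 * n → ∀ a, a < b → e a < e b := by
    intro b
    induction b with
    | zero => intro _ a ha; omega
    | succ c ih =>
      intro hb a ha
      rcases Nat.lt_succ_iff_lt_or_eq.mp ha with h | h
      · exact (ih (by omega) a h).trans (estep c hb)
      · subst h; exact estep a hb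
  have ele : ∀ a b, a ≤ b → b < 2 * n → e a ≤ e b := by
    intro a b hab hb
    rcases eq_or_lt_of_le hab with h | h
    · subst h; rfl
    · exact (emono b hb a h).le
  have einj : ∀ a, a < 2 * n → ∀ b, b < 2 * n → e a = e b → a = b := by
    intro a ha b hb hab
    rcases lt_trichotomy a b with h | h | h
    · exact absurd hab (emono b hb a h).ne
    · exact h
    · exact absurd hab.symm (emono a ha b h).ne
  -- Y as image of e
  have hYe : Y = (Finset.range (2 * n)).image e := by
    rw [hY]
    ext y
    simp only [Finset.mem_union, Finset.mem_image, Finset.mem_range]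
    constructor
    · rintro (⟨j, hj, rfl⟩ | ⟨j, hj, rfl⟩)
      · exact ⟨2 * j, by omega, he_even j⟩
      · exact ⟨2 * j + 1, by omega, he_odd j⟩
    · rintro ⟨j, hj, rfl⟩
      rcases Nat.even_or_odd j with ⟨a, ha⟩ | ⟨a, ha⟩
      · exact Or.inl ⟨a, by omega, by rw [← he_even a, ha]; ring_nf⟩
      · exact Or.inr ⟨a, by omega, by rw [← he_odd a, ha]⟩
  set xk : ℝ := β - β ^ (m + 2) with hxk
  set xt : ℝ := β ^ (m + 3) with hxt
  have hj0lt : j0 < n := by omega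
  have hj0lt2 : j0 < 2 * n := by omega
  -- transfer the product to indices
  have hYerase : Y.erase xk = ((Finset.range (2 * n)).erase j0).image e := by
    rw [hYe]
    ext y
    simp only [Finset.mem_erase, Finset.mem_image, Finset.mem_range]
    constructor
    · rintro ⟨hne, j, hj, rfl⟩
      exact ⟨j, ⟨fun h => hne (by rw [h, ej0]), hj⟩, rfl⟩
    · rintro ⟨j, ⟨hjne, hj⟩, rfl⟩
      refine ⟨fun h => hjne ?_, j, hj, rfl⟩
      exact einj j hj j0 hj0lt2 (by rw [h, ej0])
  have hprodidx : ∏ y ∈ Y.erase xk, ((xt - y) / (xk - y)) =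
      ∏ j ∈ (Finset.range (2 * n)).erase j0, ((xt - e j) / (xk - e j)) := by
    rw [hYerase]
    refine Finset.prod_image ?_
    intro a ha b hb hab
    simp only [Finset.mem_coe, Finset.mem_erase, Finset.mem_range] at ha hb
    exact einj a ha.2 b hb.2 hab
  -- split into left and right halves
  set A : Finset ℕ := (Finset.range n).erase j0 with hA
  set B : Finset ℕ := Finset.Ico n (2 * n) with hB
  have hsplit : (Finset.range (2 * n)).erase j0 = A ∪ B := by
    ext j
    simp only [hA, hB, Finset.mem_erase, Finset.mem_range, Finset.mem_union, Finset.mem_Ico]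
    omega
  have hdisj : Disjoint A B := by
    simp only [Finset.disjoint_left, hA, hB, Finset.mem_erase, Finset.mem_range,
      Finset.mem_Ico]
    omega
  set g : ℕ → ℝ := fun j => |xt - e j| / |xk - e j| with hg
  have habs : |∏ j ∈ (Finset.range (2 * n)).erase j0, ((xt - e j) / (xk - e j))| =
      (∏ j ∈ A, g j) * (∏ j ∈ B, g j) := by
    rw [Finset.abs_prod, hsplit, Finset.prod_union hdisj]
    congr 1 <;> exact Finset.prod_congr rfl fun j _ => abs_div _ _
  -- right half bound
  set r : ℝ := (1 - β ^ (m + 3)) / (1 - β + β ^ (m + 2)) with hr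
  have hxkpos : 0 < xk := by
    have h3 := hpow3 (m + 1)
    have := hpow (m + 2)
    have hb1 : β ^ (m + 1) ≤ β ^ 1 := pow_le_pow_of_le_one hβ.le hβ1.le (by omega)
    simp only [pow_one] at hb1
    rw [hxk]; nlinarith
  have hxklt : xk < 1/3 := by
    rw [hxk]; nlinarith [hpow (m + 2)]
  have hxtlt : xt < β ^ (m + 2) := by
    rw [hxt]
    exact pow_lt_pow_right_of_lt_one₀ hβ hβ1 (by omega)
  have hxtpos : 0 < xt := hpow (m + 3)
  have hxtxk : xt < xk := by
    have h3 := hpow3 (m + 1)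
    have h1 : β ^ (m + 1) ≤ β ^ 1 := pow_le_pow_of_le_one hβ.le hβ1.le (by omega)
    simp only [pow_one] at h1
    rw [hxt, hxk]
    have : β ^ (m + 3) ≤ β ^ (m + 2) := hxtlt.le
    nlinarith [hpow (m + 2), hpow (m + 3)]
  have hrpos : 0 < r := by
    rw [hr]
    apply div_pos
    · have h1 : β ^ (m + 3) ≤ β ^ 1 := pow_le_pow_of_le_one hβ.le hβ1.le (by omega)
      simp only [pow_one] at h1
      linarith
    · linarith [hpow (m + 2)]
  have hright : r ^ n ≤ ∏ j ∈ B, g j := by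
    have hcard : B.card = n := by
      rw [hB, Nat.card_Ico]; omega
    calc r ^ n = ∏ _j ∈ B, r := by rw [Finset.prod_const, hcard]
    _ ≤ ∏ j ∈ B, g j := by
      apply Finset.prod_le_prod (fun _ _ => hrpos.le)
      intro j hj
      simp only [hB, Finset.mem_Ico] at hj
      have hy1 : 1 - β ≤ e j := by rw [← en]; exact ele n j hj.1 hj.2
      have hy2 : e j ≤ 1 := by
        rw [← elast]; exact ele j (2 * n - 1) (by omega) (by omega)
      set y := e j
      have hy3 : xt < y := by linarith
      have hy4 : xk < y := by linarith
      have habs1 : |xt - y| = y - xt := by rw [abs_sub_comm]; exact abs_of_pos (by linarith)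
      have habs2 : |xk - y| = y - xk := by rw [abs_sub_comm]; exact abs_of_pos (by linarith)
      rw [hg]
      simp only
      rw [habs1, habs2, hr]
      rw [div_le_div_iff₀ (by nlinarith [hpow (m + 2)]) (by linarith)]
      have hfac : (0:ℝ) ≤ (xk - xt) * (1 - y) := mul_nonneg (by linarith) (by linarith)
      have hxk1 : (1:ℝ) - β + β ^ (m + 2) = 1 - xk := by rw [hxk]; ring
      have hxt1 : (1:ℝ) - β ^ (m + 3) = 1 - xt := by rw [hxt]
      rw [hxk1, hxt1]
      nlinarith
  -- symmetry of the left nodes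
  have hn2 : n = 2 * 2 ^ (m + 1) := by rw [hn]; ring
  have h1p : 1 ≤ 2 ^ (m + 1) := Nat.one_le_two_pow
  have esym : ∀ j, j < n → e j + e (n - 1 - j) = β := by
    intro j hj
    have hsym := cL_sym β L hL0 hLleft hLright (m + 1)
    rcases Nat.even_or_odd j with ⟨a, ha⟩ | ⟨a, ha⟩
    · have haLt : a < 2 ^ (m + 1) := by omega
      have hidx : n - 1 - j = 2 * (2 ^ (m + 1) - 1 - a) + 1 := by omega
      rw [hidx, show j = 2 * a by omega, he_even, he_odd]
      linarith [hsym a haLt]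
    · have haLt : a < 2 ^ (m + 1) := by omega
      have hidx : n - 1 - j = 2 * (2 ^ (m + 1) - 1 - a) := by omega
      rw [hidx, show j = 2 * a + 1 by omega, he_odd, he_even]
      linarith [hsym a haLt]
  set A' : Finset ℕ := (Finset.range n).erase 1 with hA'
  have hDtrans : ∏ j ∈ A, |xk - e j| = ∏ j ∈ A', |e 1 - e j| := by
    refine Finset.prod_nbij' (fun j => n - 1 - j) (fun j => n - 1 - j) ?_ ?_ ?_ ?_ ?_
    · intro a haMem
      simp only [hA, hA', Finset.mem_erase, Finset.mem_range] at haMem ⊢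
      omega
    · intro a haMem
      simp only [hA, hA', Finset.mem_erase, Finset.mem_range] at haMem ⊢
      omega
    · intro a haMem
      simp only [hA, Finset.mem_erase, Finset.mem_range] at haMem
      show n - 1 - (n - 1 - a) = a
      omega
    · intro a haMem
      simp only [hA', Finset.mem_erase, Finset.mem_range] at haMem
      show n - 1 - (n - 1 - a) = a
      omega
    · intro a haMem
      simp only [hA, Finset.mem_erase, Finset.mem_range] at haMem
      show |xk - e a| = |e 1 - e (n - 1 - a)|
      have h1 := esym a haMem.2
      have h2 : e (n - 1 - a) = β - e a := by linarith
      rw [h2, e1, hxk, abs_sub_comm]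
      congr 1
      ring
  -- pulling out the special factors
  have hA1 : (1:ℕ) ∈ A := by
    simp only [hA, Finset.mem_erase, Finset.mem_range]
    omega
  have h0A : (0:ℕ) ∈ A.erase 1 := by
    simp only [hA, Finset.mem_erase, Finset.mem_range]
    omega
  have hj0A' : j0 ∈ A' := by
    simp only [hA', Finset.mem_erase, Finset.mem_range]
    omega
  have h0A' : (0:ℕ) ∈ A'.erase j0 := by
    simp only [hA', Finset.mem_erase, Finset.mem_range]
    omega
  set S : Finset ℕ := (A.erase 1).erase 0 with hS
  have hSeq : (A'.erase j0).erase 0 = S := by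
    rw [hS, hA, hA']
    ext x
    simp only [Finset.mem_erase, Finset.mem_range]
    tauto
  have hN : ∏ j ∈ A, |xt - e j| =
      |xt - e 1| * (|xt - e 0| * ∏ j ∈ S, |xt - e j|) := by
    rw [hS, ← Finset.mul_prod_erase _ _ hA1, ← Finset.mul_prod_erase _ _ h0A]
  have hD : ∏ j ∈ A', |e 1 - e j| =
      |e 1 - e j0| * (|e 1 - e 0| * ∏ j ∈ S, |e 1 - e j|) := by
    rw [← hSeq, ← Finset.mul_prod_erase _ _ hj0A', ← Finset.mul_prod_erase _ _ h0A']
  -- bounds on the generic factors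
  have hSfacts : ∀ j ∈ S, 0 < |e 1 - e j| ∧ |e 1 - e j| ≤ |xt - e j| := by
    intro j hj
    simp only [hS, hA, Finset.mem_erase, Finset.mem_range] at hj
    obtain ⟨hj0ne, hj1ne, _, hjn⟩ := hj
    have hj2 : 2 ≤ j := by omega
    have he2le : e 2 ≤ e j := ele 2 j hj2 (by omega)
    have h3 := hpow3 (m + 1)
    have hej : β ^ (m + 2) < e j := by
      rw [e2] at he2le
      have := hpow (m + 2)
      linarith
    have h1 : |e 1 - e j| = e j - e 1 := by
      rw [abs_sub_comm, e1]
      exact abs_of_pos (by linarith)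
    have h2 : |xt - e j| = e j - xt := by
      rw [abs_sub_comm]
      refine abs_of_pos ?_
      have : xt < β ^ (m + 2) := hxtlt
      linarith
    rw [h1, h2, e1]
    constructor
    · linarith
    · linarith [hxtlt]
  have hQpos : (0:ℝ) < ∏ j ∈ S, |e 1 - e j| :=
    Finset.prod_pos fun j hj => (hSfacts j hj).1
  have hQle : ∏ j ∈ S, |e 1 - e j| ≤ ∏ j ∈ S, |xt - e j| :=
    Finset.prod_le_prod (fun j hj => (hSfacts j hj).1.le) fun j hj => (hSfacts j hj).2
  have hQ1pos : (0:ℝ) < ∏ j ∈ S, |xt - e j| := lt_of_lt_of_le hQpos hQle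
  -- explicit values
  have hm1 : β ^ (m + 1) ≤ 1 / 3 := by
    calc β ^ (m + 1) ≤ β ^ 1 := pow_le_pow_of_le_one hβ.le hβ1.le (by omega)
    _ ≤ 1 / 3 := by simpa using hβ'
  have hm2 : β ^ (m + 2) = β * β ^ (m + 1) := by ring
  have hd1pos : 0 < β - 2 * β ^ (m + 2) := by nlinarith [hpow (m + 1)]
  have hc1 : |xt - e 1| = β ^ (m + 2) - β ^ (m + 3) := by
    rw [abs_sub_comm, e1, hxt]
    exact abs_of_pos (by linarith [hxtlt, hxt])
  have hc2 : |xt - e 0| = β ^ (m + 3) := by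
    rw [e0, sub_zero, hxt]
    exact abs_of_pos (hpow (m + 3))
  have hd1 : |e 1 - e j0| = β - 2 * β ^ (m + 2) := by
    rw [e1, ej0, abs_sub_comm]
    rw [show β - β ^ (m + 2) - β ^ (m + 2) = β - 2 * β ^ (m + 2) by ring]
    exact abs_of_pos hd1pos
  have hd2 : |e 1 - e 0| = β ^ (m + 2) := by
    rw [e0, e1, sub_zero]
    exact abs_of_pos (hpow (m + 2))
  -- the left-half bound
  have hleft : xt ≤ ∏ j ∈ A, g j := by
    have hgdef : ∏ j ∈ A, g j =
        (∏ j ∈ A, |xt - e j|) / (∏ j ∈ A, |xk - e j|) := by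
      simp only [hg]
      rw [← Finset.prod_div_distrib]
    rw [hgdef, hDtrans, hN, hD, hc1, hc2, hd1, hd2]
    set Q1 := ∏ j ∈ S, |xt - e j|
    set Q2 := ∏ j ∈ S, |e 1 - e j|
    have hdenpos : 0 < (β - 2 * β ^ (m + 2)) * (β ^ (m + 2) * Q2) :=
      mul_pos hd1pos (mul_pos (hpow (m + 2)) hQpos)
    rw [le_div_iff₀ hdenpos, hxt]
    have hps : β ^ (m + 3) = β ^ (m + 2) * β := pow_succ β (m + 2)
    calc β ^ (m + 3) * ((β - 2 * β ^ (m + 2)) * (β ^ (m + 2) * Q2))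
        ≤ β ^ (m + 3) * ((1 - β) * (β ^ (m + 2) * Q1)) := by
          apply mul_le_mul_of_nonneg_left _ (hpow (m + 3)).le
          apply mul_le_mul (by linarith [hpow (m + 2)])
            (mul_le_mul_of_nonneg_left hQle (hpow (m + 2)).le)
            (mul_pos (hpow (m + 2)) hQpos).le (by linarith)
      _ = (β ^ (m + 2) - β ^ (m + 3)) * (β ^ (m + 3) * Q1) := by
          rw [hps]; ring
  -- conclusion
  have hrew : (1 - xt) / (1 - β + β ^ (m + 2)) = r := by rw [hxt, hr]
  calc β ^ (m + 3) * ((1 - β ^ (m + 3)) / (1 - β + β ^ (m + 2))) ^ n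
      = xt * ((1 - xt) / (1 - β + β ^ (m + 2))) ^ n := by rw [hxt]
    _ = xt * r ^ n := by rw [hrew]
    _ ≤ (∏ j ∈ A, g j) * (∏ j ∈ B, g j) :=
        mul_le_mul hleft hright (pow_nonneg hrpos.le n) (le_trans hxtpos.le hleft)
    _ = |∏ y ∈ Y.erase xk, ((xt - y) / (xk - y))| := by rw [hprodidx, habs]
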